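/- Let F, h be as above with F' > 0, h' > 0, and let ω, ε ∈ ℝ, 𝓔 > 0, c > 0 (unit cost), S > 0 (revenue share). Define marginal cost λ = c/(F'(h(v))·exp(ω)·𝓔), output elasticity e = F'(h(v))·(1/F(h(v)))·v·h'(v), markup μ = e/S, price P = μ·λ, and revenue R = P·F(h(v))·exp(ω)·exp(ε). Then R = c · v·h'(v) · S⁻¹ · 𝓔⁻¹ · exp(ε). In particular, R does not depend on ω or on the outer function F. -/

import Mathlib

/-- Eq. (10) of Theorem 1: substituting price = markup × marginal cost into the
revenue equation, both `exp ω` and the outer function `F` cancel: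
`R = c · v·h'(v) · S⁻¹ · 𝓔⁻¹ · exp ε`. -/
theorem stmt_5 (F h : ℝ → ℝ) (v ω ε 𝓔 c S : ℝ)
    (hv : 0 < v) (h𝓔 : 0 < 𝓔) (hc : 0 < c) (hS : 0 < S)
    (hFpos : 0 < F (h v)) (hF' : 0 < deriv F (h v)) (hh' : 0 < deriv h v)
    (lam e μ P R : ℝ)
    (hlam : lam = c / (deriv F (h v) * Real.exp ω * 𝓔))
    (he : e = deriv F (h v) * (1 / F (h v)) * (v * deriv h v))
    (hμ : μ = e / S)
    (hP : P = μ * lam)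
    (hR : R = P * F (h v) * Real.exp ω * Real.exp ε) :
    R = c * (v * deriv h v) * S⁻¹ * 𝓔⁻¹ * Real.exp ε := by
  subst hR hP hμ he hlam
  have h1 : F (h v) ≠ 0 := hFpos.ne'
  have h2 : deriv F (h v) ≠ 0 := hF'.ne'
  have h3 : Real.exp ω ≠ 0 := (Real.exp_pos ω).ne'
  have h4 : 𝓔 ≠ 0 := h𝓔.ne'
  have h5 : S ≠ 0 := hS.ne'
  field_simp
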